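/- Assume f is μ-strongly convex and the ADMM optimality conditions and saddle-point assumptions hold. Then the discrete Lyapunov function E(k) = (1/2s)‖G(y_k − y⋆)‖² + (s/2)‖λ_k − λ⋆‖² satisfies E(k+1) − E(k) ≤ −(μ/2)‖x_{k+1} − x⋆‖², and consequently the running average x̄_N = (1/(N+1)) Σ_{k=1}^{N+1} x_k satisfies ‖x̄_N − x⋆‖² ≤ (‖G(y_0 − y⋆)‖² + s²‖λ_0 − λ⋆‖²)/(μ s (N+1)). -/

import Mathlib

open ContinuousLinearMap

lemma admm_key {Em : Type*} [NormedAddCommGroup Em] [InnerProductSpace ℝ Em]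
    (a b p q : Em) (s C : ℝ) (hs : 0 < s)
    (hA : (inner ℝ ((1/s) • (a - b) - p) (a - s • (p - q)) : ℝ) ≤ C)
    (hB : (inner ℝ p a : ℝ) ≤ 0) :
    (1/(2*s)) * ‖a‖^2 + (s/2) * ‖p‖^2 - ((1/(2*s)) * ‖b‖^2 + (s/2) * ‖q‖^2) ≤ C := by
  have hs' : s ≠ 0 := ne_of_gt hs
  have hkey : 2*s*((1/(2*s)) * ‖a‖^2 + (s/2) * ‖p‖^2 - ((1/(2*s)) * ‖b‖^2 + (s/2) * ‖q‖^2))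
      = 2*s*(inner ℝ ((1/s) • (a - b) - p) (a - s • (p - q)) : ℝ) + 2*s*(inner ℝ p a : ℝ)
        - ‖(a - b) - s • (p - q)‖^2 := by
    simp only [← real_inner_self_eq_norm_sq, inner_sub_left, inner_sub_right,
      real_inner_smul_left, real_inner_smul_right]
    rw [real_inner_comm b a, real_inner_comm q p, real_inner_comm a p,
      real_inner_comm a q, real_inner_comm b p, real_inner_comm b q]
    field_simp
    ring
  have h3 : 2*s*(inner ℝ ((1/s) • (a - b) - p) (a - s • (p - q)) : ℝ) ≤ 2*s*C :=
    mul_le_mul_of_nonneg_left hA (by linarith)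
  have h4 : 2*s*(inner ℝ p a : ℝ) ≤ 0 :=
    mul_nonpos_of_nonneg_of_nonpos (by linarith) hB
  have h5 : (0:ℝ) ≤ ‖(a - b) - s • (p - q)‖^2 := sq_nonneg _
  have h6 : 2*s*((1/(2*s)) * ‖a‖^2 + (s/2) * ‖p‖^2 - ((1/(2*s)) * ‖b‖^2 + (s/2) * ‖q‖^2)) ≤ 2*s*C := by
    linarith
  exact le_of_mul_le_mul_left h6 (by linarith)

/-- `v` is a subgradient of `f` at `x`. -/
def SubgradientAt {E : Type*} [NormedAddCommGroup E] [InnerProductSpace ℝ E]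
    (f : E → ℝ) (x v : E) : Prop :=
  ∀ y, f x + (inner ℝ v (y - x) : ℝ) ≤ f y

/-- With `f` μ-strongly convex, the ADMM Lyapunov function decreases at rate
`−(μ/2)‖x_{k+1}−x⋆‖²` and the running average converges strongly at rate `O(1/N)`. -/
theorem admm_strongly_convex_average_rate
    {E1 E2 Em : Type*}
    [NormedAddCommGroup E1] [InnerProductSpace ℝ E1] [CompleteSpace E1]
    [NormedAddCommGroup E2] [InnerProductSpace ℝ E2] [CompleteSpace E2]
    [NormedAddCommGroup Em] [InnerProductSpace ℝ Em] [CompleteSpace Em]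
    (f : E1 → ℝ) (g : E2 → ℝ) (μ : ℝ) (hμ : 0 < μ)
    (hfsc : ∀ p u, SubgradientAt f p u →
      ∀ z, f p + (inner ℝ u (z - p) : ℝ) + (μ / 2) * ‖z - p‖ ^ 2 ≤ f z)
    (hgconv : ConvexOn ℝ Set.univ g)
    (F : E1 →L[ℝ] Em) (G : E2 →L[ℝ] Em) (h : Em) (s : ℝ) (hs : 0 < s)
    (x : ℕ → E1) (y : ℕ → E2) (lam : ℕ → Em)
    (hoptx : ∀ k, SubgradientAt f (x (k + 1))
      ((1 / s) • adjoint F (G (y (k + 1)) - G (y k)) - adjoint F (lam (k + 1))))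
    (hopty : ∀ k, SubgradientAt g (y (k + 1)) (-adjoint G (lam (k + 1))))
    (hoptlam : ∀ k, s • (lam (k + 1) - lam k) = F (x (k + 1)) + G (y (k + 1)) - h)
    (xstar : E1) (ystar : E2) (lstar : Em)
    (hsaddle : F xstar + G ystar = h)
    (hfstar : SubgradientAt f xstar (-adjoint F lstar))
    (hgstar : SubgradientAt g ystar (-adjoint G lstar)) :
    (∀ k, ((1 / (2 * s)) * ‖G (y (k + 1)) - G ystar‖ ^ 2
          + (s / 2) * ‖lam (k + 1) - lstar‖ ^ 2)
        - ((1 / (2 * s)) * ‖G (y k) - G ystar‖ ^ 2 + (s / 2) * ‖lam k - lstar‖ ^ 2)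
      ≤ -(μ / 2) * ‖x (k + 1) - xstar‖ ^ 2) ∧
    (∀ N : ℕ,
      ‖((N + 1 : ℝ)⁻¹ • ∑ k ∈ Finset.range (N + 1), x (k + 1)) - xstar‖ ^ 2
        ≤ (‖G (y 0) - G ystar‖ ^ 2 + s ^ 2 * ‖lam 0 - lstar‖ ^ 2) / (μ * s * (N + 1 : ℝ))) := by
  have hs' : s ≠ 0 := ne_of_gt hs
  have part1 : ∀ k, ((1 / (2 * s)) * ‖G (y (k + 1)) - G ystar‖ ^ 2
          + (s / 2) * ‖lam (k + 1) - lstar‖ ^ 2)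
        - ((1 / (2 * s)) * ‖G (y k) - G ystar‖ ^ 2 + (s / 2) * ‖lam k - lstar‖ ^ 2)
      ≤ -(μ / 2) * ‖x (k + 1) - xstar‖ ^ 2 := by
    intro k
    set a : Em := G (y (k+1)) - G ystar with ha
    set b : Em := G (y k) - G ystar with hb
    set p : Em := lam (k+1) - lstar with hp
    set q : Em := lam k - lstar with hq
    -- the dual-feasibility real inequality hB
    have hB : (inner ℝ p a : ℝ) ≤ 0 := by
      have h1 := hopty k ystar
      have h2 := hgstar (y (k+1))
      have heq : (inner ℝ (-adjoint G (lam (k+1))) (ystar - y (k+1)) : ℝ)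
          + (inner ℝ (-adjoint G lstar) (y (k+1) - ystar) : ℝ) = (inner ℝ p a : ℝ) := by
        rw [ha, hp]
        simp only [inner_neg_left, adjoint_inner_left, map_sub, inner_sub_left, inner_sub_right]
        ring
      linarith
    -- primal relation
    have hpq : lam (k+1) - lam k = p - q := by rw [hp, hq]; abel
    have hFd : F (xstar - x (k+1)) = a - s • (p - q) := by
      have h0 := hoptlam k
      rw [hpq] at h0
      have hFs : F xstar = h - G ystar := by rw [← hsaddle]; abel
      have hF1 : F (x (k+1)) = s • (p - q) - (G (y (k+1)) - h) := by rw [h0]; abel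
      rw [map_sub, hFs, hF1, ha]
      abel
    -- strong convexity inequality hA
    have hA : (inner ℝ ((1/s) • (a - b) - p) (a - s • (p - q)) : ℝ)
        ≤ -(μ / 2) * ‖x (k + 1) - xstar‖ ^ 2 := by
      have h1 := hfsc _ _ (hoptx k) xstar
      have h2 := hfstar (x (k+1))
      have heq : (inner ℝ ((1 / s) • adjoint F (G (y (k + 1)) - G (y k)) - adjoint F (lam (k + 1)))
            (xstar - x (k+1)) : ℝ)
          + (inner ℝ (-adjoint F lstar) (x (k+1) - xstar) : ℝ)
          = inner ℝ ((1/s) • (a - b) - p) (F (xstar - x (k+1))) := by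
        have hab : a - b = G (y (k+1)) - G (y k) := by rw [ha, hb]; abel
        rw [hab, hp]
        simp only [inner_neg_left, inner_sub_left, real_inner_smul_left,
          adjoint_inner_left, map_sub, inner_sub_right]
        ring
      have hnrm : ‖xstar - x (k+1)‖ = ‖x (k+1) - xstar‖ := norm_sub_rev _ _
      rw [hFd] at heq
      rw [← heq]
      rw [hnrm] at h1
      linarith
    have := admm_key a b p q s (-(μ / 2) * ‖x (k + 1) - xstar‖ ^ 2) hs hA hB
    linarith
  refine ⟨part1, fun N => ?_⟩
  set Φ : ℕ → ℝ := fun k => (1/(2*s)) * ‖G (y k) - G ystar‖^2 + (s/2) * ‖lam k - lstar‖^2 with hΦ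
  have hΦstep : ∀ k, Φ (k+1) - Φ k ≤ -(μ/2) * ‖x (k+1) - xstar‖^2 := by
    intro k
    have := part1 k
    simp only [hΦ]
    convert this using 2 <;> ring
  have hn : (0:ℝ) < (N:ℝ) + 1 := by positivity
  have hn' : ((N:ℝ) + 1) ≠ 0 := ne_of_gt hn
  -- telescoping sum
  have htel : Φ (N+1) - Φ 0 = ∑ k ∈ Finset.range (N+1), (Φ (k+1) - Φ k) :=
    (Finset.sum_range_sub Φ (N+1)).symm
  have hsumle : ∑ k ∈ Finset.range (N+1), (Φ (k+1) - Φ k)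
      ≤ ∑ k ∈ Finset.range (N+1), (-(μ/2) * ‖x (k+1) - xstar‖^2) :=
    Finset.sum_le_sum (fun k _ => hΦstep k)
  have hmulsum : ∑ k ∈ Finset.range (N+1), (-(μ/2) * ‖x (k+1) - xstar‖^2)
      = -(μ/2) * ∑ k ∈ Finset.range (N+1), ‖x (k+1) - xstar‖^2 :=
    (Finset.mul_sum _ _ _).symm
  have hΦpos : 0 ≤ Φ (N+1) := by simp only [hΦ]; positivity
  have hsumbound : (μ/2) * ∑ k ∈ Finset.range (N+1), ‖x (k+1) - xstar‖^2 ≤ Φ 0 := by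
    rw [hmulsum, ← htel] at hsumle
    clear_value Φ
    linarith
  -- average inequality
  have hsplit : ∑ k ∈ Finset.range (N+1), (x (k+1) - xstar)
      = (∑ k ∈ Finset.range (N+1), x (k+1)) - ((N:ℝ)+1) • xstar := by
    rw [Finset.sum_sub_distrib, Finset.sum_const, Finset.card_range]
    congr 1
    rw [← Nat.cast_smul_eq_nsmul ℝ]
    push_cast
    ring_nf
  have havgvec : ((N + 1 : ℝ)⁻¹ • ∑ k ∈ Finset.range (N + 1), x (k + 1)) - xstar
      = ((N:ℝ)+1)⁻¹ • ∑ k ∈ Finset.range (N+1), (x (k+1) - xstar) := by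
    rw [hsplit, smul_sub, smul_smul, inv_mul_cancel₀ hn', one_smul]
  have hcs : (∑ k ∈ Finset.range (N+1), ‖x (k+1) - xstar‖)^2
      ≤ ((N:ℝ)+1) * ∑ k ∈ Finset.range (N+1), ‖x (k+1) - xstar‖^2 := by
    have := sq_sum_le_card_mul_sum_sq (s := Finset.range (N+1))
      (f := fun k => ‖x (k+1) - xstar‖)
    simpa [Finset.card_range] using this
  have hnormsum : ‖∑ k ∈ Finset.range (N+1), (x (k+1) - xstar)‖
      ≤ ∑ k ∈ Finset.range (N+1), ‖x (k+1) - xstar‖ := norm_sum_le _ _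
  have havg : ‖((N + 1 : ℝ)⁻¹ • ∑ k ∈ Finset.range (N + 1), x (k + 1)) - xstar‖^2
      ≤ ((N:ℝ)+1)⁻¹ * ∑ k ∈ Finset.range (N+1), ‖x (k+1) - xstar‖^2 := by
    rw [havgvec, norm_smul]
    have h1 : ‖((N:ℝ)+1)⁻¹‖ = ((N:ℝ)+1)⁻¹ := by
      rw [Real.norm_eq_abs, abs_of_pos (by positivity)]
    rw [h1, mul_pow]
    have h2 : ‖∑ k ∈ Finset.range (N+1), (x (k+1) - xstar)‖^2
        ≤ ((N:ℝ)+1) * ∑ k ∈ Finset.range (N+1), ‖x (k+1) - xstar‖^2 := by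
      calc ‖∑ k ∈ Finset.range (N+1), (x (k+1) - xstar)‖^2
          ≤ (∑ k ∈ Finset.range (N+1), ‖x (k+1) - xstar‖)^2 := by
            apply pow_le_pow_left₀ (norm_nonneg _) hnormsum
        _ ≤ _ := hcs
    calc (((N:ℝ)+1)⁻¹)^2 * ‖∑ k ∈ Finset.range (N+1), (x (k+1) - xstar)‖^2
        ≤ (((N:ℝ)+1)⁻¹)^2 * (((N:ℝ)+1) * ∑ k ∈ Finset.range (N+1), ‖x (k+1) - xstar‖^2) := by
          apply mul_le_mul_of_nonneg_left h2 (by positivity)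
      _ = ((N:ℝ)+1)⁻¹ * ∑ k ∈ Finset.range (N+1), ‖x (k+1) - xstar‖^2 := by
          field_simp
  -- combine
  have hsum2 : ∑ k ∈ Finset.range (N+1), ‖x (k+1) - xstar‖^2 ≤ (2/μ) * Φ 0 := by
    have hμ'' : μ ≠ 0 := ne_of_gt hμ
    have h1 : (2/μ) * ((μ/2) * ∑ k ∈ Finset.range (N+1), ‖x (k+1) - xstar‖^2)
        ≤ (2/μ) * Φ 0 := mul_le_mul_of_nonneg_left hsumbound (by positivity)
    have h2 : (2/μ) * ((μ/2) * ∑ k ∈ Finset.range (N+1), ‖x (k+1) - xstar‖^2)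
        = ∑ k ∈ Finset.range (N+1), ‖x (k+1) - xstar‖^2 := by field_simp
    linarith
  have hfinal : ((N:ℝ)+1)⁻¹ * ((2/μ) * Φ 0)
      = (‖G (y 0) - G ystar‖ ^ 2 + s ^ 2 * ‖lam 0 - lstar‖ ^ 2) / (μ * s * ((N:ℝ) + 1)) := by
    simp only [hΦ]
    field_simp
  have : ((N:ℝ)+1)⁻¹ * ∑ k ∈ Finset.range (N+1), ‖x (k+1) - xstar‖^2
      ≤ ((N:ℝ)+1)⁻¹ * ((2/μ) * Φ 0) :=
    mul_le_mul_of_nonneg_left hsum2 (by positivity)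
  calc ‖((N + 1 : ℝ)⁻¹ • ∑ k ∈ Finset.range (N + 1), x (k + 1)) - xstar‖^2
      ≤ ((N:ℝ)+1)⁻¹ * ∑ k ∈ Finset.range (N+1), ‖x (k+1) - xstar‖^2 := havg
    _ ≤ ((N:ℝ)+1)⁻¹ * ((2/μ) * Φ 0) := this
    _ = _ := hfinal
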